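/- Let Δ = {x_0,…,x_d} and Δ' = {x'_0,…,x'_d} be regular simplices of edge length 1 in ℝ^d, both centered at the origin, with ‖x_i - x'_i‖ ≤ ε for all i, where x'_i = R x_i + τ for some R ∈ O(d) and τ ∈ ℝ^d. Then (d+1)ε² ≥ (1/2)‖R - I‖²_op + ‖τ‖², and consequently ε ≥ (‖R - I‖_op + ‖τ‖)/(2√(d+1)). -/
import Mathlib

open scoped RealInnerProductSpace
open Finset


private lemma simplex_gram (d : ℕ) (x : Fin (d + 1) → EuclideanSpace ℝ (Fin d))
    (hx : ∀ i j, i ≠ j → ‖x i - x j‖ = 1) (hcx : ∑ i, x i = 0) :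
    (∀ i, ⟪x i, x i⟫ = d / (2 * (d + 1))) ∧
      (∀ i j, i ≠ j → ⟪x i, x j⟫ = -1 / (2 * (d + 1))) := by
  set n : Fin (d + 1) → ℝ := fun i => ⟪x i, x i⟫ with hn
  have hpol : ∀ i j, i ≠ j → ⟪x i, x j⟫ = (n i + n j - 1) / 2 := by
    intro i j hij
    have h1 : ‖x i - x j‖ ^ 2 = 1 := by rw [hx i j hij]; norm_num
    have h2 : ‖x i - x j‖ ^ 2 = ‖x i‖ ^ 2 - 2 * ⟪x i, x j⟫ + ‖x j‖ ^ 2 :=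
      norm_sub_sq_real _ _
    have h3 : n i = ‖x i‖ ^ 2 := real_inner_self_eq_norm_sq _
    have h4 : n j = ‖x j‖ ^ 2 := real_inner_self_eq_norm_sq _
    rw [h1] at h2
    rw [h3, h4]; linarith
  set S : ℝ := ∑ i, n i with hS
  have key : ∀ i, (d + 1 : ℝ) * n i = d - S := by
    intro i
    have hzero : ∑ j, ⟪x i, x j⟫ = 0 := by
      rw [← inner_sum, hcx, inner_zero_right]
    have hsplit : ∑ j, ⟪x i, x j⟫ = ⟪x i, x i⟫ + ∑ j ∈ univ.erase i, ⟪x i, x j⟫ :=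
      (Finset.add_sum_erase _ _ (mem_univ i)).symm
    have herase : ∑ j ∈ univ.erase i, ⟪x i, x j⟫
        = ∑ j ∈ univ.erase i, (n i + n j - 1) / 2 :=
      Finset.sum_congr rfl fun j hj => hpol i j (Finset.ne_of_mem_erase hj).symm
    have hcard : (univ.erase i).card = d := by
      simp [Finset.card_erase_of_mem]
    have hsum_n : ∑ j ∈ univ.erase i, n j = S - n i := by
      rw [hS, Finset.sum_erase_eq_sub (mem_univ i)]
    have hval : ∑ j ∈ univ.erase i, (n i + n j - 1) / 2
        = ((d : ℝ) * (n i - 1) + (S - n i)) / 2 := by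
      rw [← Finset.sum_div]
      congr 1
      rw [Finset.sum_sub_distrib, Finset.sum_add_distrib, hsum_n, Finset.sum_const,
        Finset.sum_const, hcard]
      push_cast; ring
    have h0 := hzero
    rw [hsplit, herase, hval] at h0
    have : ⟪x i, x i⟫ = n i := rfl
    rw [this] at h0
    linarith
  have hSd : S = d / 2 := by
    have h1 : ∑ i : Fin (d + 1), ((d + 1 : ℝ) * n i) = (d + 1 : ℝ) * S := by
      rw [hS, Finset.mul_sum]
    have h2 : ∑ i : Fin (d + 1), ((d + 1 : ℝ) * n i) = (d + 1 : ℝ) * ((d : ℝ) - S) := by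
      rw [Finset.sum_congr rfl fun i _ => key i, Finset.sum_const, Finset.card_univ,
        Fintype.card_fin]
      push_cast; ring
    have hd1 : (0 : ℝ) < d + 1 := by positivity
    nlinarith [h1, h2]
  have hd1 : (d + 1 : ℝ) ≠ 0 := by positivity
  have hself : ∀ i, n i = (d : ℝ) / (2 * (d + 1)) := by
    intro i
    have h := key i
    rw [hSd] at h
    field_simp
    linarith
  refine ⟨hself, fun i j hij => ?_⟩
  rw [hpol i j hij, hself i, hself j]
  field_simp
  ring

private lemma simplex_span (d : ℕ) (x : Fin (d + 1) → EuclideanSpace ℝ (Fin d))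
    (hx : ∀ i j, i ≠ j → ‖x i - x j‖ = 1) (hcx : ∑ i, x i = 0) :
    Submodule.span ℝ (Set.range x) = ⊤ := by
  obtain ⟨hself, hoff⟩ := simplex_gram d x hx hcx
  have hd1 : (d + 1 : ℝ) ≠ 0 := by positivity
  have li : LinearIndependent ℝ (fun i : Fin d => x i.succ) := by
    rw [Fintype.linearIndependent_iff]
    intro g hg
    have key : ∀ j : Fin d, g j * ((d : ℝ) + 1) = ∑ i, g i := by
      intro j
      have h0 : ∑ i, g i * ⟪x j.succ, x i.succ⟫ = 0 := by
        have h : ⟪x j.succ, ∑ i, g i • x i.succ⟫ = (0 : ℝ) := by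
          rw [hg, inner_zero_right]
        rw [inner_sum] at h
        rw [← h]
        exact Finset.sum_congr rfl fun i _ => by rw [real_inner_smul_right]
      have hterm : ∀ i : Fin d,
          g i * ⟪x j.succ, x i.succ⟫
            = g i * (-1 / (2 * ((d : ℝ) + 1)))
              + (if i = j then g i * ((d : ℝ) / (2 * (d + 1)) - (-1 / (2 * (d + 1)))) else 0) := by
        intro i
        by_cases h : i = j
        · subst h
          rw [if_pos rfl, hself]
          push_cast
          ring
        · rw [if_neg h, hoff _ _ (fun hc => (Ne.symm h) (Fin.succ_injective _ hc)), add_zero]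
      rw [Finset.sum_congr rfl fun i _ => hterm i, Finset.sum_add_distrib,
        Finset.sum_ite_eq' univ j (fun i => g i * ((d : ℝ) / (2 * (d + 1)) - (-1 / (2 * (d + 1))))),
        if_pos (mem_univ j), ← Finset.sum_mul] at h0
      have expand : g j * ((d : ℝ) / (2 * (d + 1)) - (-1 / (2 * (d + 1)))) = g j / 2 := by
        field_simp
        ring
      rw [expand] at h0
      field_simp at h0
      linarith
    have hs : ∑ i, g i = 0 := by
      have h1 : ∑ j : Fin d, (g j * ((d : ℝ) + 1)) = (∑ i, g i) * ((d : ℝ) + 1) := by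
        rw [← Finset.sum_mul]
      have h2 : ∑ j : Fin d, (g j * ((d : ℝ) + 1)) = (d : ℝ) * ∑ i, g i := by
        rw [Finset.sum_congr rfl fun j _ => key j, Finset.sum_const, Finset.card_univ,
          Fintype.card_fin, nsmul_eq_mul]
      nlinarith [h1, h2]
    intro j
    have := key j
    rw [hs] at this
    have hd1' : (0 : ℝ) < (d : ℝ) + 1 := by positivity
    exact by nlinarith [this]
  have h1 : Submodule.span ℝ (Set.range (fun i : Fin d => x i.succ))
      ≤ Submodule.span ℝ (Set.range x) :=
    Submodule.span_mono (by rintro _ ⟨i, rfl⟩; exact ⟨i.succ, rfl⟩)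
  have h2 : Module.finrank ℝ (Submodule.span ℝ (Set.range (fun i : Fin d => x i.succ))) = d := by
    rw [finrank_span_eq_card li, Fintype.card_fin]
  have h3 : Module.finrank ℝ (EuclideanSpace ℝ (Fin d)) = d := finrank_euclideanSpace_fin
  apply Submodule.eq_top_of_finrank_eq
  have h4 := Submodule.finrank_mono h1
  have h5 := Submodule.finrank_le (Submodule.span ℝ (Set.range x))
  omega


private lemma simplex_identity (d : ℕ) (x : Fin (d + 1) → EuclideanSpace ℝ (Fin d))
    (hx : ∀ i j, i ≠ j → ‖x i - x j‖ = 1) (hcx : ∑ i, x i = 0) :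
    ∀ v, ∑ i, ⟪x i, v⟫ • x i = (2⁻¹ : ℝ) • v := by
  obtain ⟨hself, hoff⟩ := simplex_gram d x hx hcx
  have hd1 : (d + 1 : ℝ) ≠ 0 := by positivity
  have hspan := simplex_span d x hx hcx
  set f : EuclideanSpace ℝ (Fin d) →ₗ[ℝ] EuclideanSpace ℝ (Fin d) :=
    ∑ i, (innerₛₗ ℝ (x i)).smulRight (x i) with hf
  set g : EuclideanSpace ℝ (Fin d) →ₗ[ℝ] EuclideanSpace ℝ (Fin d) :=
    (2⁻¹ : ℝ) • (LinearMap.id : EuclideanSpace ℝ (Fin d) →ₗ[ℝ] EuclideanSpace ℝ (Fin d)) with hg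
  have hfg : f = g := by
    apply LinearMap.ext_on hspan
    rintro _ ⟨j, rfl⟩
    have hfx : f (x j) = ∑ i, ⟪x i, x j⟫ • x i := by
      simp [hf, LinearMap.sum_apply]
    have hterm : ∀ i : Fin (d + 1),
        ⟪x i, x j⟫ • x i
          = (-1 / (2 * ((d : ℝ) + 1))) • x i
            + (if i = j then ((d : ℝ) / (2 * (d + 1)) - (-1 / (2 * (d + 1)))) • x i else 0) := by
      intro i
      by_cases h : i = j
      · subst h
        rw [if_pos rfl, hself, ← add_smul]
        push_cast
        norm_num
      · rw [if_neg h, hoff _ _ h, add_zero]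
    have hc : ((d : ℝ) / (2 * (d + 1)) - (-1 / (2 * (d + 1)))) = 2⁻¹ := by
      field_simp
      ring
    rw [hfx, Finset.sum_congr rfl fun i _ => hterm i, Finset.sum_add_distrib,
      Finset.sum_ite_eq' univ j, if_pos (mem_univ j), ← Finset.smul_sum, hcx, smul_zero,
      zero_add, hc]
    simp [hg]
  intro v
  have := LinearMap.congr_fun hfg v
  simpa [hf, hg, LinearMap.sum_apply] using this

private lemma simplex_sq (d : ℕ) (x : Fin (d + 1) → EuclideanSpace ℝ (Fin d))
    (hx : ∀ i j, i ≠ j → ‖x i - x j‖ = 1) (hcx : ∑ i, x i = 0) :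
    ∀ v, ∑ i, ⟪x i, v⟫ ^ 2 = ‖v‖ ^ 2 / 2 := by
  intro v
  have h := simplex_identity d x hx hcx v
  have h2 : ⟪∑ i, ⟪x i, v⟫ • x i, v⟫ = ⟪(2⁻¹ : ℝ) • v, v⟫ := by rw [h]
  rw [sum_inner, real_inner_smul_left, real_inner_self_eq_norm_sq] at h2
  have h3 : ∑ i, ⟪⟪x i, v⟫ • x i, v⟫ = ∑ i, ⟪x i, v⟫ ^ 2 := by
    refine Finset.sum_congr rfl fun i _ => ?_
    rw [real_inner_smul_left, real_inner_comm, sq]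
  rw [h3] at h2
  rw [h2]; ring

private lemma simplex_opnorm (d : ℕ) (x : Fin (d + 1) → EuclideanSpace ℝ (Fin d))
    (hx : ∀ i j, i ≠ j → ‖x i - x j‖ = 1) (hcx : ∑ i, x i = 0)
    (A : EuclideanSpace ℝ (Fin d) →L[ℝ] EuclideanSpace ℝ (Fin d)) :
    ‖A‖ ^ 2 ≤ 2 * ∑ i, ‖A (x i)‖ ^ 2 := by
  set SA : ℝ := ∑ i, ‖A (x i)‖ ^ 2 with hSA
  have hSA0 : 0 ≤ SA := Finset.sum_nonneg fun i _ => sq_nonneg _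
  have hop : ‖A‖ ≤ Real.sqrt (2 * SA) := by
    apply A.opNorm_le_bound (Real.sqrt_nonneg _)
    intro v
    have hid := simplex_identity d x hx hcx v
    have hv : v = ∑ i, (2 * ⟪x i, v⟫) • x i := by
      have h2 : v = (2 : ℝ) • ((2⁻¹ : ℝ) • v) := by
        rw [smul_smul]; norm_num
      conv_lhs => rw [h2, ← hid]
      rw [Finset.smul_sum]
      exact Finset.sum_congr rfl fun i _ => by rw [smul_smul]
    have hAv : A v = ∑ i, (2 * ⟪x i, v⟫) • A (x i) := by
      conv_lhs => rw [hv]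
      rw [map_sum]
      exact Finset.sum_congr rfl fun i _ => by rw [map_smul]
    have h1 : ‖A v‖ ≤ ∑ i, |2 * ⟪x i, v⟫| * ‖A (x i)‖ := by
      rw [hAv]
      refine (norm_sum_le _ _).trans (le_of_eq ?_)
      exact Finset.sum_congr rfl fun i _ => by rw [norm_smul, Real.norm_eq_abs]
    have csq := Finset.sum_mul_sq_le_sq_mul_sq Finset.univ
      (fun i => |2 * ⟪x i, v⟫|) (fun i => ‖A (x i)‖)
    have hsq1 : ∑ i, |2 * ⟪x i, v⟫| ^ 2 = 2 * ‖v‖ ^ 2 := by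
      have hs := simplex_sq d x hx hcx v
      calc ∑ i, |2 * ⟪x i, v⟫| ^ 2 = ∑ i, 4 * ⟪x i, v⟫ ^ 2 := by
            refine Finset.sum_congr rfl fun i _ => ?_
            rw [sq_abs]; ring
        _ = 4 * (‖v‖ ^ 2 / 2) := by rw [← Finset.mul_sum, hs]
        _ = 2 * ‖v‖ ^ 2 := by ring
    have hb : (∑ i, |2 * ⟪x i, v⟫| * ‖A (x i)‖) ^ 2 ≤ 2 * ‖v‖ ^ 2 * SA := by
      calc (∑ i, |2 * ⟪x i, v⟫| * ‖A (x i)‖) ^ 2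
          ≤ (∑ i, |2 * ⟪x i, v⟫| ^ 2) * ∑ i, ‖A (x i)‖ ^ 2 := csq
        _ = 2 * ‖v‖ ^ 2 * SA := by rw [hsq1]
    have hAv2 : ‖A v‖ ^ 2 ≤ 2 * SA * ‖v‖ ^ 2 := by
      nlinarith [norm_nonneg (A v), h1, hb,
        Finset.sum_nonneg (fun i (_ : i ∈ Finset.univ) =>
          mul_nonneg (abs_nonneg (2 * ⟪x i, v⟫)) (norm_nonneg (A (x i))))]
    have hs2 : Real.sqrt (2 * SA) ^ 2 = 2 * SA := Real.sq_sqrt (by positivity)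
    have hfin : ‖A v‖ ^ 2 ≤ (Real.sqrt (2 * SA) * ‖v‖) ^ 2 := by
      rw [mul_pow, hs2]; linarith [hAv2]
    exact (pow_le_pow_iff_left₀ (norm_nonneg _) (by positivity) two_ne_zero).mp hfin
  nlinarith [hop, Real.sq_sqrt (by positivity : (0 : ℝ) ≤ 2 * SA), norm_nonneg A,
    Real.sqrt_nonneg (2 * SA)]

set_option maxHeartbeats 1000000 in
theorem hausdorff_dist_controls_motion
    (d : ℕ) (ε : ℝ) (hε : 0 ≤ ε)
    (x x' : Fin (d + 1) → EuclideanSpace ℝ (Fin d))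
    (hx : ∀ i j, i ≠ j → ‖x i - x j‖ = 1)
    (hx' : ∀ i j, i ≠ j → ‖x' i - x' j‖ = 1)
    (hcx : ∑ i, x i = 0) (hcx' : ∑ i, x' i = 0)
    (R : EuclideanSpace ℝ (Fin d) ≃ₗᵢ[ℝ] EuclideanSpace ℝ (Fin d))
    (τ : EuclideanSpace ℝ (Fin d))
    (hmotion : ∀ i, x' i = R (x i) + τ)
    (hclose : ∀ i, ‖x i - x' i‖ ≤ ε) :
    (1 / 2) * ‖R.toLinearIsometry.toContinuousLinearMap -
        (1 : EuclideanSpace ℝ (Fin d) →L[ℝ] EuclideanSpace ℝ (Fin d))‖ ^ 2 + ‖τ‖ ^ 2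
      ≤ (d + 1) * ε ^ 2 ∧
    (‖R.toLinearIsometry.toContinuousLinearMap -
        (1 : EuclideanSpace ℝ (Fin d) →L[ℝ] EuclideanSpace ℝ (Fin d))‖ + ‖τ‖) /
        (2 * Real.sqrt (d + 1)) ≤ ε := by
  classical
  set A : EuclideanSpace ℝ (Fin d) →L[ℝ] EuclideanSpace ℝ (Fin d) :=
    R.toLinearIsometry.toContinuousLinearMap -
      (1 : EuclideanSpace ℝ (Fin d) →L[ℝ] EuclideanSpace ℝ (Fin d)) with hA
  have hAapp : ∀ v, A v = R v - v := by
    intro v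
    simp [hA]
  set SA : ℝ := ∑ i, ‖A (x i)‖ ^ 2 with hSA
  have hSA0 : 0 ≤ SA := Finset.sum_nonneg fun i _ => sq_nonneg _
  have hsum : SA + ((d : ℝ) + 1) * ‖τ‖ ^ 2 ≤ ((d : ℝ) + 1) * ε ^ 2 := by
    have hterm : ∀ i, ‖A (x i) + τ‖ ^ 2
        = ‖A (x i)‖ ^ 2 + 2 * ⟪A (x i), τ⟫ + ‖τ‖ ^ 2 := fun i => norm_add_sq_real _ _
    have hle : ∀ i, ‖A (x i) + τ‖ ^ 2 ≤ ε ^ 2 := by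
      intro i
      have h1 : A (x i) + τ = x' i - x i := by
        rw [hmotion i, hAapp]
        abel
      rw [h1, ← norm_neg]
      have h2 : -(x' i - x i) = x i - x' i := by abel
      rw [h2]
      have := hclose i
      nlinarith [norm_nonneg (x i - x' i)]
    have hsum2 : ∑ i, ‖A (x i) + τ‖ ^ 2 ≤ ((d : ℝ) + 1) * ε ^ 2 := by
      calc ∑ i, ‖A (x i) + τ‖ ^ 2 ≤ ∑ _i : Fin (d + 1), ε ^ 2 :=
            Finset.sum_le_sum fun i _ => hle i
        _ = ((d : ℝ) + 1) * ε ^ 2 := by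
            rw [Finset.sum_const, Finset.card_univ, Fintype.card_fin, nsmul_eq_mul]
            push_cast; ring
    have hcross : ∑ i, ⟪A (x i), τ⟫ = 0 := by
      rw [← sum_inner, ← map_sum, hcx, map_zero, inner_zero_left]
    have hexp : ∑ i, ‖A (x i) + τ‖ ^ 2
        = SA + 2 * (∑ i, ⟪A (x i), τ⟫) + ((d : ℝ) + 1) * ‖τ‖ ^ 2 := by
      rw [Finset.sum_congr rfl fun i _ => hterm i, Finset.sum_add_distrib,
        Finset.sum_add_distrib, ← Finset.mul_sum, Finset.sum_const, Finset.card_univ,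
        Fintype.card_fin, nsmul_eq_mul, hSA]
      push_cast; ring
    rw [hexp, hcross] at hsum2
    linarith
  have hopsq : ‖A‖ ^ 2 ≤ 2 * SA := by
    have := simplex_opnorm d x hx hcx A
    rw [← hSA] at this
    exact this
  have part1 : (1 / 2) * ‖A‖ ^ 2 + ‖τ‖ ^ 2 ≤ ((d : ℝ) + 1) * ε ^ 2 := by
    nlinarith [sq_nonneg ‖τ‖, Nat.cast_nonneg (α := ℝ) d]
  refine ⟨part1, ?_⟩
  have ha : (0 : ℝ) ≤ ‖A‖ := norm_nonneg _
  have ht : (0 : ℝ) ≤ ‖τ‖ := norm_nonneg _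
  have hsq : (‖A‖ + ‖τ‖) ^ 2 ≤ 4 * ((d : ℝ) + 1) * ε ^ 2 := by
    nlinarith [sq_nonneg (‖A‖ - ‖τ‖), part1]
  have hrt : (0 : ℝ) < Real.sqrt ((d : ℝ) + 1) := Real.sqrt_pos.mpr (by positivity)
  have h4 : (2 * Real.sqrt ((d : ℝ) + 1) * ε) ^ 2 = 4 * ((d : ℝ) + 1) * ε ^ 2 := by
    have := Real.sq_sqrt (by positivity : (0 : ℝ) ≤ (d : ℝ) + 1)
    nlinarith [this]
  have h5 : ‖A‖ + ‖τ‖ ≤ 2 * Real.sqrt ((d : ℝ) + 1) * ε := by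
    nlinarith [hsq, h4, mul_nonneg (mul_nonneg (by norm_num : (0:ℝ) ≤ 2) hrt.le) hε]
  rw [div_le_iff₀ (by positivity)]
  linarith
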